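/- (Fiber of the Newton groupoid for r ≥ 3: additive group.) Fix integers r ≥ 3 and l ≥ 2, and a point (x₀,y₀) ∈ kⁿ × kˡ with f(x₀,y₀) = 0 and C(x₀,y₀) = 0 (the whole Jacobian matrix vanishes; in particular Q(x₀,y₀) = 0 and Ĉ(x₀,y₀) = 0). Then: (a) v(x₀,y₀,ξ,η) = 1 identically as a polynomial in ξ,η; (b) for every commutative k-algebra R, the group G(R) := {(ξ,η) ∈ Rⁿ × Rˡ : η + Ĉ(x₀,y₀)·u(x₀,y₀,ξ,η) = 0, v(x₀,y₀,ξ,η) ∈ R^×} with operation (ξ̃,η̃)∘(ξ,η) = (ξ + v(x₀,y₀,ξ,η)^{r}ξ̃, η + v(x₀,y₀,ξ,η)^{r-1}η̃) equals Rⁿ × {0}, and the operation is (ξ̃,0)∘(ξ,0) = (ξ + ξ̃, 0); hence G(R) is isomorphic as a group to the additive group Rⁿ, naturally in R. -/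

import Mathlib

open MvPolynomial Matrix

noncomputable section

/-- The `l×l` Jacobian matrix `C(x,y)` of `f` with respect to the `y`-variables. -/
def jacC {k : Type*} [Field k] {n l : ℕ} (f : Fin l → MvPolynomial (Fin n ⊕ Fin l) k) :
    Matrix (Fin l) (Fin l) (MvPolynomial (Fin n ⊕ Fin l) k) :=
  Matrix.of fun i j => pderiv (Sum.inr j) (f i)

/-- `Q(x,y) := det C(x,y)`. -/
def jacQ {k : Type*} [Field k] {n l : ℕ} (f : Fin l → MvPolynomial (Fin n ⊕ Fin l) k) :
    MvPolynomial (Fin n ⊕ Fin l) k :=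
  (jacC f).det

/-- In the polynomial ring `k[x,y,ξ,η]` (variables indexed by
`(Fin n ⊕ Fin l) ⊕ (Fin n ⊕ Fin l)`, the first summand being the `(x,y)`-variables and the
second the `(ξ,η)`-variables), the substitution sending `x_i ↦ x_i + Q(x,y)^r·ξ_i` and
`y_j ↦ y_j + Q(x,y)^(r-1)·η_j`. -/
def newtonSubst {k : Type*} [Field k] {n l : ℕ} (f : Fin l → MvPolynomial (Fin n ⊕ Fin l) k)
    (r : ℕ) : Fin n ⊕ Fin l → MvPolynomial ((Fin n ⊕ Fin l) ⊕ (Fin n ⊕ Fin l)) k :=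
  fun w => Sum.elim
    (fun i => X (Sum.inl (Sum.inl i)) +
      (rename Sum.inl (jacQ f)) ^ r * X (Sum.inr (Sum.inl i)))
    (fun j => X (Sum.inl (Sum.inr j)) +
      (rename Sum.inl (jacQ f)) ^ (r - 1) * X (Sum.inr (Sum.inr j))) w

/-- The property defining the polynomial (vector) `u(x,y,ξ,η)`:
`Q^r·u = f(x+Q^r ξ, y+Q^(r-1) η) − f(x,y) − Q^(r-1)·C(x,y)·η` in `k[x,y,ξ,η]`. -/
def IsNewtonU {k : Type*} [Field k] {n l : ℕ} (f : Fin l → MvPolynomial (Fin n ⊕ Fin l) k)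
    (r : ℕ) (uP : Fin l → MvPolynomial ((Fin n ⊕ Fin l) ⊕ (Fin n ⊕ Fin l)) k) : Prop :=
  ∀ i, (rename Sum.inl (jacQ f)) ^ r * uP i =
    aeval (newtonSubst f r) (f i) - rename Sum.inl (f i) -
      (rename Sum.inl (jacQ f)) ^ (r - 1) *
        ∑ j : Fin l, rename Sum.inl (jacC f i j) * X (Sum.inr (Sum.inr j))

/-- The property defining the polynomial `v(x,y,ξ,η)`:
`Q·v = Q(x+Q^r ξ, y+Q^(r-1) η)` in `k[x,y,ξ,η]`. -/
def IsNewtonV {k : Type*} [Field k] {n l : ℕ} (f : Fin l → MvPolynomial (Fin n ⊕ Fin l) k)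
    (r : ℕ) (vP : MvPolynomial ((Fin n ⊕ Fin l) ⊕ (Fin n ⊕ Fin l)) k) : Prop :=
  (rename Sum.inl (jacQ f)) * vP = aeval (newtonSubst f r) (jacQ f)

variable {k : Type*} [Field k] {n l : ℕ}

/-- Evaluation of the Jacobian matrix `C` at a point `(x,y)`. -/
def CAt (f : Fin l → MvPolynomial (Fin n ⊕ Fin l) k) {S : Type*} [CommRing S] [Algebra k S]
    (x : Fin n → S) (y : Fin l → S) : Matrix (Fin l) (Fin l) S :=
  Matrix.of fun i j => aeval (Sum.elim x y) (jacC f i j)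

/-- Evaluation of a polynomial in `k[x,y,ξ,η]` at a point `(x,y,ξ,η)`. -/
def evalXYΞΗ {S : Type*} [CommRing S] [Algebra k S]
    (x : Fin n → S) (y : Fin l → S) (ξ : Fin n → S) (η : Fin l → S)
    (p : MvPolynomial ((Fin n ⊕ Fin l) ⊕ (Fin n ⊕ Fin l)) k) : S :=
  aeval (Sum.elim (Sum.elim x y) (Sum.elim ξ η)) p

/-- The set `G(R)` of the fiber of the Newton groupoid over the `k`-point `(x₀,y₀)`:
pairs `(ξ,η)` with `η + Ĉ(x₀,y₀)·u(x₀,y₀,ξ,η) = 0` and `v(x₀,y₀,ξ,η) ∈ R^×`. -/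
def newtonFiber (f : Fin l → MvPolynomial (Fin n ⊕ Fin l) k)
    (uP : Fin l → MvPolynomial ((Fin n ⊕ Fin l) ⊕ (Fin n ⊕ Fin l)) k)
    (vP : MvPolynomial ((Fin n ⊕ Fin l) ⊕ (Fin n ⊕ Fin l)) k)
    (x₀ : Fin n → k) (y₀ : Fin l → k)
    (R : Type*) [CommRing R] [Algebra k R] : Set ((Fin n → R) × (Fin l → R)) :=
  {p | (∀ i, p.2 i +
        (CAt f (fun i' => algebraMap k R (x₀ i'))
          (fun j' => algebraMap k R (y₀ j'))).adjugate.mulVec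
          (fun i' => evalXYΞΗ (fun i'' => algebraMap k R (x₀ i''))
            (fun j'' => algebraMap k R (y₀ j'')) p.1 p.2 (uP i')) i = 0) ∧
      IsUnit (evalXYΞΗ (fun i'' => algebraMap k R (x₀ i''))
        (fun j'' => algebraMap k R (y₀ j'')) p.1 p.2 vP)}

/-- The composition law `(ξ̃,η̃)∘(ξ,η) = (ξ + v(x₀,y₀,ξ,η)^r ξ̃, η + v(x₀,y₀,ξ,η)^(r-1) η̃)`
on the fiber over `(x₀,y₀)`. -/
def newtonFiberOp (r : ℕ)
    (vP : MvPolynomial ((Fin n ⊕ Fin l) ⊕ (Fin n ⊕ Fin l)) k)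
    (x₀ : Fin n → k) (y₀ : Fin l → k)
    {R : Type*} [CommRing R] [Algebra k R]
    (a b : (Fin n → R) × (Fin l → R)) : (Fin n → R) × (Fin l → R) :=
  (fun i => b.1 i + (evalXYΞΗ (fun i'' => algebraMap k R (x₀ i''))
      (fun j'' => algebraMap k R (y₀ j'')) b.1 b.2 vP) ^ r * a.1 i,
   fun j => b.2 j + (evalXYΞΗ (fun i'' => algebraMap k R (x₀ i''))
      (fun j'' => algebraMap k R (y₀ j'')) b.1 b.2 vP) ^ (r - 1) * a.2 j)


lemma aeval_algebraMap_comp {σ S : Type*} [CommRing S] [Algebra k S] (v : σ → k)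
    (p : MvPolynomial σ k) :
    aeval (fun w => algebraMap k S (v w)) p = algebraMap k S (aeval v p) := by
  rw [aeval_def, aeval_def, eval₂_comp_left (algebraMap k S) (algebraMap k k) v p]
  simp [Function.comp_def]

lemma newton_subst_congr (f : Fin l → MvPolynomial (Fin n ⊕ Fin l) k) (r : ℕ)
    (p : MvPolynomial (Fin n ⊕ Fin l) k) :
    ∃ w, aeval (newtonSubst f r) p =
      rename Sum.inl p + (rename Sum.inl (jacQ f)) ^ (r - 1) * w := by
  set Q : MvPolynomial ((Fin n ⊕ Fin l) ⊕ (Fin n ⊕ Fin l)) k := rename Sum.inl (jacQ f) with hQ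
  set I := Ideal.span {Q ^ (r - 1)} with hI
  have key : (Ideal.Quotient.mkₐ k I).comp (aeval (newtonSubst f r)) =
      (Ideal.Quotient.mkₐ k I).comp (rename Sum.inl) := by
    apply MvPolynomial.algHom_ext
    intro w
    simp only [AlgHom.comp_apply, aeval_X, rename_X, Ideal.Quotient.mkₐ_eq_mk]
    rw [Ideal.Quotient.eq]
    have hmem : ∀ q : MvPolynomial ((Fin n ⊕ Fin l) ⊕ (Fin n ⊕ Fin l)) k,
        ∀ s : ℕ, r - 1 ≤ s → Q ^ s * q ∈ I := by
      intro q s hs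
      rw [hI, Ideal.mem_span_singleton]
      exact dvd_mul_of_dvd_left (pow_dvd_pow Q hs) q
    cases w with
    | inl i =>
      simp only [newtonSubst, Sum.elim_inl, add_sub_cancel_left]
      exact hmem _ r (Nat.sub_le r 1)
    | inr j =>
      simp only [newtonSubst, Sum.elim_inr, add_sub_cancel_left]
      exact hmem _ (r - 1) le_rfl
  have := AlgHom.congr_fun key p
  simp only [AlgHom.comp_apply, Ideal.Quotient.mkₐ_eq_mk] at this
  rw [Ideal.Quotient.eq, hI, Ideal.mem_span_singleton] at this
  obtain ⟨w, hw⟩ := this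
  exact ⟨w, by linear_combination hw⟩

lemma newton_vP_eq (f : Fin l → MvPolynomial (Fin n ⊕ Fin l) k) (hQ0 : jacQ f ≠ 0)
    (r : ℕ) (hr : 3 ≤ r)
    (vP : MvPolynomial ((Fin n ⊕ Fin l) ⊕ (Fin n ⊕ Fin l)) k) (hv : IsNewtonV f r vP) :
    ∃ w, vP = 1 + (rename Sum.inl (jacQ f)) ^ (r - 2) * w := by
  obtain ⟨w, hw⟩ := newton_subst_congr f r (jacQ f)
  refine ⟨w, ?_⟩
  have hQne : (rename Sum.inl (jacQ f) :
      MvPolynomial ((Fin n ⊕ Fin l) ⊕ (Fin n ⊕ Fin l)) k) ≠ 0 := by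
    intro h
    exact hQ0 ((rename_injective Sum.inl Sum.inl_injective) (by simpa using h))
  apply mul_left_cancel₀ hQne
  rw [IsNewtonV] at hv
  rw [hv, hw]
  have h1 : r - 1 = (r - 2) + 1 := by omega
  rw [h1, pow_succ]
  ring

lemma aeval_jacQ_zero (f : Fin l → MvPolynomial (Fin n ⊕ Fin l) k) (hl : 1 ≤ l)
    (x₀ : Fin n → k) (y₀ : Fin l → k)
    (hC : ∀ i j, aeval (Sum.elim x₀ y₀) (jacC f i j) = 0) :
    aeval (Sum.elim x₀ y₀) (jacQ f) = 0 := by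
  have : aeval (Sum.elim x₀ y₀) (jacQ f) =
      ((jacC f).map (aeval (Sum.elim x₀ y₀))).det :=
    AlgHom.map_det _ _
  rw [this]
  have hz : (jacC f).map (aeval (Sum.elim x₀ y₀)) = 0 := by
    ext i j
    simpa [Matrix.map_apply] using hC i j
  rw [hz]
  exact (haveI : Nonempty (Fin l) := ⟨⟨0, by omega⟩⟩; Matrix.det_zero)

/-- **Fiber of the Newton groupoid for `r ≥ 3`: additive group.**
Fix `r ≥ 3`, `l ≥ 2`, and a `k`-point `(x₀,y₀)` with `f(x₀,y₀) = 0` and `C(x₀,y₀) = 0`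
(hence `Q(x₀,y₀) = 0` and `Ĉ(x₀,y₀) = 0`).  Then:
(a) `v(x₀,y₀,ξ,η) = 1` identically as a polynomial in `ξ,η`;
(b) for every commutative `k`-algebra `R`, the group `G(R)` equals `Rⁿ × {0}`, the
operation is `(ξ̃,0)∘(ξ,0) = (ξ + ξ̃, 0)`; hence `(ξ,η) ↦ ξ` is a bijection of `G(R)`
with the additive group `Rⁿ`, naturally in `R`. -/
theorem newton_fiber_additive (hn : 1 ≤ n) (hl : 2 ≤ l)
    (f : Fin l → MvPolynomial (Fin n ⊕ Fin l) k) (hQ0 : jacQ f ≠ 0) (r : ℕ) (hr : 3 ≤ r)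
    (uP : Fin l → MvPolynomial ((Fin n ⊕ Fin l) ⊕ (Fin n ⊕ Fin l)) k)
    (vP : MvPolynomial ((Fin n ⊕ Fin l) ⊕ (Fin n ⊕ Fin l)) k)
    (hu : IsNewtonU f r uP) (hv : IsNewtonV f r vP)
    (x₀ : Fin n → k) (y₀ : Fin l → k)
    (hf : ∀ i, aeval (Sum.elim x₀ y₀) (f i) = 0)
    (hC : ∀ i j, aeval (Sum.elim x₀ y₀) (jacC f i j) = 0) :
    (aeval (Sum.elim (fun w => (C (Sum.elim x₀ y₀ w) : MvPolynomial (Fin n ⊕ Fin l) k))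
        (X : (Fin n ⊕ Fin l) → MvPolynomial (Fin n ⊕ Fin l) k)) vP = 1) ∧
    (∀ (R : Type*) (_ : CommRing R) (_ : Algebra k R),
      (∀ p : (Fin n → R) × (Fin l → R), p ∈ newtonFiber f uP vP x₀ y₀ R ↔ p.2 = 0) ∧
      (∀ a b, a ∈ newtonFiber f uP vP x₀ y₀ R → b ∈ newtonFiber f uP vP x₀ y₀ R →
        newtonFiberOp r vP x₀ y₀ a b = (fun i => a.1 i + b.1 i, 0)) ∧
      Function.Bijective
        (fun p : {p : (Fin n → R) × (Fin l → R) // p ∈ newtonFiber f uP vP x₀ y₀ R} =>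
          p.val.1)) := by
  obtain ⟨w, hwv⟩ := newton_vP_eq f hQ0 r hr vP hv
  have hQk : aeval (Sum.elim x₀ y₀) (jacQ f) = 0 := aeval_jacQ_zero f (by omega) x₀ y₀ hC
  have hr2 : r - 2 ≠ 0 := by omega
  constructor
  · rw [hwv]
    simp only [_root_.map_add, _root_.map_one, _root_.map_mul, map_pow, aeval_rename,
      Sum.elim_comp_inl]
    have h0 : aeval (fun w => (C (Sum.elim x₀ y₀ w) : MvPolynomial (Fin n ⊕ Fin l) k))
        (jacQ f) = 0 := by
      have := aeval_algebraMap_comp (S := MvPolynomial (Fin n ⊕ Fin l) k) (Sum.elim x₀ y₀)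
        (jacQ f)
      simpa [MvPolynomial.algebraMap_eq, hQk] using this
    rw [h0, zero_pow hr2, zero_mul, add_zero]
  · intro R _ _
    have hv1 : ∀ (ξ : Fin n → R) (η : Fin l → R),
        evalXYΞΗ (fun i => algebraMap k R (x₀ i)) (fun j => algebraMap k R (y₀ j)) ξ η vP
          = 1 := by
      intro ξ η
      rw [evalXYΞΗ, hwv]
      simp only [_root_.map_add, _root_.map_one, _root_.map_mul, map_pow, aeval_rename,
        Sum.elim_comp_inl]
      have hpt : (Sum.elim (fun i => algebraMap k R (x₀ i)) (fun j => algebraMap k R (y₀ j)))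
          = fun w => algebraMap k R (Sum.elim x₀ y₀ w) := by
        funext w; cases w <;> rfl
      rw [hpt]
      have h0 : aeval (fun w => algebraMap k R (Sum.elim x₀ y₀ w)) (jacQ f) = 0 := by
        rw [aeval_algebraMap_comp, hQk, map_zero]
      rw [h0, zero_pow hr2, zero_mul, add_zero]
    have hCA : CAt f (fun i' => algebraMap k R (x₀ i')) (fun j' => algebraMap k R (y₀ j'))
        = 0 := by
      ext i j
      show aeval (Sum.elim (fun i' => algebraMap k R (x₀ i'))
        (fun j' => algebraMap k R (y₀ j'))) (jacC f i j) = 0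
      have hpt : (Sum.elim (fun i' => algebraMap k R (x₀ i'))
          (fun j' => algebraMap k R (y₀ j')))
          = fun w => algebraMap k R (Sum.elim x₀ y₀ w) := by
        funext w; cases w <;> rfl
      rw [hpt, aeval_algebraMap_comp, hC i j, map_zero]
    haveI : Nontrivial (Fin l) := Fin.nontrivial_iff_two_le.mpr hl
    have hmem : ∀ p : (Fin n → R) × (Fin l → R),
        p ∈ newtonFiber f uP vP x₀ y₀ R ↔ p.2 = 0 := by
      intro p
      rw [newtonFiber, Set.mem_setOf_eq, hCA, Matrix.adjugate_zero, hv1]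
      simp only [Matrix.zero_mulVec, Pi.zero_apply, add_zero, isUnit_one, and_true]
      constructor
      · intro h; funext i; exact h i
      · intro h i; rw [h]; rfl
    refine ⟨hmem, ?_, ?_⟩
    · intro a b ha hb
      rw [newtonFiberOp, hv1]
      have ha2 := (hmem a).mp ha
      have hb2 := (hmem b).mp hb
      refine Prod.ext ?_ ?_
      · funext i; simp [add_comm]
      · funext j
        show b.2 j + 1 ^ (r - 1) * a.2 j = 0
        rw [ha2, hb2]; simp
    · constructor
      · rintro ⟨p, hp⟩ ⟨q, hq⟩ h
        simp only at h
        apply Subtype.ext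
        apply Prod.ext h
        rw [(hmem p).mp hp, (hmem q).mp hq]
      · intro ξ
        exact ⟨⟨(ξ, 0), (hmem (ξ, 0)).mpr rfl⟩, rfl⟩


end
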